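/- Let D be a type and k : D × D → ℝ a symmetric function such that every finite kernel matrix formed from k is positive semidefinite and k(z, z) ≤ 1 for all z ∈ D. Let η > 0 and let q₁, …, q_n ∈ D. For 1 ≤ t ≤ n, define the posterior variance σ²_{t−1}(q_t) = k(q_t, q_t) − k_{t−1}(q_t)ᵀ (K_{t−1} + η² I)⁻¹ k_{t−1}(q_t), where K_{t−1} = [k(q_i, q_j)]_{1 ≤ i, j ≤ t−1} and k_{t−1}(z) = (k(z, q_i))_{1 ≤ i ≤ t−1} (with σ²₀(q₁) = k(q₁, q₁)). Then ∑_{t=1}^n σ²_{t−1}(q_t) ≤ (2/log(1 + η⁻²)) · (1/2) log det(I_n + η⁻² K_n), where K_n = [k(q_i, q_j)]_{1 ≤ i, j ≤ n}. -/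

import Mathlib

open Matrix

namespace SumPostVarAux

variable {D : Type*}

/-- The kernel matrix of the first `m` queries. -/
noncomputable def Kmat (k : D → D → ℝ) (q : ℕ → D) (m : ℕ) : Matrix (Fin m) (Fin m) ℝ :=
  Matrix.of fun i j => k (q i) (q j)

/-- The regularized kernel matrix. -/
noncomputable def Amat (k : D → D → ℝ) (η : ℝ) (q : ℕ → D) (m : ℕ) :
    Matrix (Fin m) (Fin m) ℝ :=
  Matrix.of (fun i j : Fin m => k (q i) (q j)) + η ^ 2 • 1

/-- The vector of kernel evaluations of the next query against the previous ones. -/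
noncomputable def vvec (k : D → D → ℝ) (q : ℕ → D) (m : ℕ) : Fin m → ℝ :=
  fun i => k (q m) (q i)

/-- The posterior variance at step `m`. -/
noncomputable def sig (k : D → D → ℝ) (η : ℝ) (q : ℕ → D) (m : ℕ) : ℝ :=
  k (q m) (q m) - vvec k q m ⬝ᵥ ((Amat k η q m)⁻¹ *ᵥ vvec k q m)

lemma row_mul_col (m : ℕ) (M : Matrix (Fin m) (Fin m) ℝ) (u w : Fin m → ℝ) :
    (Matrix.of (fun (_ : Fin 1) j => u j) * M * Matrix.of (fun i (_ : Fin 1) => w i)) 0 0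
      = u ⬝ᵥ (M *ᵥ w) := by
  simp only [Matrix.mul_apply, Matrix.of_apply, Matrix.mulVec, dotProduct,
    Finset.sum_mul, Finset.mul_sum]
  rw [Finset.sum_comm]
  exact Finset.sum_congr rfl fun i _ => Finset.sum_congr rfl fun j _ => by ring

section Main

variable (k : D → D → ℝ) (η : ℝ) (q : ℕ → D)

lemma smul_one_posDef (hη : 0 < η) (m : ℕ) :
    (η ^ 2 • (1 : Matrix (Fin m) (Fin m) ℝ)).PosDef := by
  have h1 : (η ^ 2 • (1 : Matrix (Fin m) (Fin m) ℝ))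
      = Matrix.diagonal (fun _ => η ^ 2) := by
    ext i j
    by_cases h : i = j <;>
      simp [Matrix.one_apply, Matrix.diagonal, h]
  rw [h1]
  exact Matrix.posDef_diagonal_iff.mpr fun _ => by positivity

lemma Amat_posDef (hpsd : ∀ (m : ℕ) (z : Fin m → D),
      (Matrix.of fun i j => k (z i) (z j)).PosSemidef)
    (hη : 0 < η) (m : ℕ) : (Amat k η q m).PosDef :=
  Matrix.PosDef.posSemidef_add (hpsd m fun i => q i) (smul_one_posDef η hη m)

/-- The column block of kernel evaluations. -/
noncomputable def Bcol (m : ℕ) : Matrix (Fin m) (Fin 1) ℝ :=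
  Matrix.of fun i _ => k (q i) (q m)

lemma Kmat_submatrix (m : ℕ) :
    (Kmat k q (m + 1)).submatrix (finSumFinEquiv (m := m) (n := 1))
        (finSumFinEquiv (m := m) (n := 1))
      = Matrix.fromBlocks (Kmat k q m) (Bcol k q m)
          (Matrix.of fun (_ : Fin 1) i => k (q m) (q i))
          (Matrix.of fun _ _ => k (q m) (q m)) := by
  ext i j
  rcases i with i | i <;> rcases j with j | j <;>
    simp [Kmat, Bcol, finSumFinEquiv_apply_left, finSumFinEquiv_apply_right]

lemma Amat_submatrix (m : ℕ) :
    (Amat k η q (m + 1)).submatrix (finSumFinEquiv (m := m) (n := 1))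
        (finSumFinEquiv (m := m) (n := 1))
      = Matrix.fromBlocks (Amat k η q m) (Bcol k q m)
          (Matrix.of fun (_ : Fin 1) i => k (q m) (q i))
          (Matrix.of fun _ _ => k (q m) (q m) + η ^ 2) := by
  ext i j
  rcases i with i | i <;> rcases j with j | j <;>
    simp only [Matrix.submatrix_apply, finSumFinEquiv_apply_left,
      finSumFinEquiv_apply_right, Amat, Bcol, Matrix.add_apply, Matrix.of_apply,
      Matrix.smul_apply, Matrix.one_apply, Matrix.fromBlocks_apply₁₁,
      Matrix.fromBlocks_apply₁₂, Matrix.fromBlocks_apply₂₁, Matrix.fromBlocks_apply₂₂,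
      smul_eq_mul]
  · simp [Fin.castAdd_inj, Amat, Matrix.one_apply, apply_ite (fun r : ℝ => η ^ 2 * r)]
  · have : Fin.castAdd 1 i ≠ Fin.natAdd m j := by
      simp [Fin.ext_iff]; omega
    simp [this]
  · have : Fin.natAdd m i ≠ Fin.castAdd 1 j := by
      simp [Fin.ext_iff]; omega
    simp [this]
  · simp [Subsingleton.elim i j]

lemma det_Amat_succ (hsymm : ∀ z w, k z w = k w z)
    (hpsd : ∀ (m : ℕ) (z : Fin m → D), (Matrix.of fun i j => k (z i) (z j)).PosSemidef)
    (hη : 0 < η) (m : ℕ) :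
    (Amat k η q (m + 1)).det = (Amat k η q m).det * (η ^ 2 + sig k η q m) := by
  have hA := Amat_posDef k η q hpsd hη m
  haveI : Invertible (Amat k η q m) :=
    (Amat k η q m).invertibleOfIsUnitDet (isUnit_iff_ne_zero.mpr hA.det_pos.ne')
  have h := Matrix.det_submatrix_equiv_self (finSumFinEquiv (m := m) (n := 1))
    (Amat k η q (m + 1))
  rw [← h, Amat_submatrix, Matrix.det_fromBlocks₁₁]
  congr 1
  rw [Matrix.det_fin_one]
  simp only [Matrix.sub_apply, Matrix.of_apply, Bcol]
  rw [invOf_eq_nonsing_inv, row_mul_col]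
  have hw : (fun i : Fin m => k (q i) (q m)) = vvec k q m := funext fun i => hsymm _ _
  have hu : (fun i : Fin m => k (q m) (q i)) = vvec k q m := rfl
  rw [hw]
  have hdot : (fun i : Fin m => k (q m) (q i)) ⬝ᵥ ((Amat k η q m)⁻¹ *ᵥ vvec k q m)
      = vvec k q m ⬝ᵥ ((Amat k η q m)⁻¹ *ᵥ vvec k q m) := rfl
  rw [hdot]
  simp only [sig]
  ring

lemma det_Amat (hsymm : ∀ z w, k z w = k w z)
    (hpsd : ∀ (m : ℕ) (z : Fin m → D), (Matrix.of fun i j => k (z i) (z j)).PosSemidef)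
    (hη : 0 < η) (n : ℕ) :
    (Amat k η q n).det = ∏ t ∈ Finset.range n, (η ^ 2 + sig k η q t) := by
  induction n with
  | zero => simp [Matrix.det_fin_zero]
  | succ m ih =>
      rw [det_Amat_succ k η q hsymm hpsd hη m, ih, Finset.prod_range_succ]

lemma sig_nonneg (hsymm : ∀ z w, k z w = k w z)
    (hpsd : ∀ (m : ℕ) (z : Fin m → D), (Matrix.of fun i j => k (z i) (z j)).PosSemidef)
    (hη : 0 < η) (m : ℕ) : 0 ≤ sig k η q m := by
  have hA := Amat_posDef k η q hpsd hη m
  haveI : Invertible (Amat k η q m) :=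
    (Amat k η q m).invertibleOfIsUnitDet (isUnit_iff_ne_zero.mpr hA.det_pos.ne')
  have hBH : (Bcol k q m)ᴴ = Matrix.of fun (_ : Fin 1) (i : Fin m) => k (q m) (q i) := by
    ext i j
    simp [Bcol, Matrix.conjTranspose_apply, hsymm (q j) (q m)]
  have hP : (Matrix.fromBlocks (Amat k η q m) (Bcol k q m) (Bcol k q m)ᴴ
      (Matrix.of fun _ _ : Fin 1 => k (q m) (q m))).PosSemidef := by
    have h1 : ((Kmat k q (m + 1)).submatrix (finSumFinEquiv (m := m) (n := 1))
        finSumFinEquiv).PosSemidef :=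
      (Matrix.posSemidef_submatrix_equiv _).mpr (hpsd (m + 1) fun i => q i)
    rw [Kmat_submatrix] at h1
    have h2 : (Matrix.fromBlocks (η ^ 2 • (1 : Matrix (Fin m) (Fin m) ℝ)) 0 0
        (0 : Matrix (Fin 1) (Fin 1) ℝ)).PosSemidef := by
      have hd : Matrix.fromBlocks (η ^ 2 • (1 : Matrix (Fin m) (Fin m) ℝ)) 0 0
          (0 : Matrix (Fin 1) (Fin 1) ℝ)
          = Matrix.diagonal (Sum.elim (fun _ : Fin m => η ^ 2) (fun _ : Fin 1 => (0 : ℝ))) := by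
        rw [← Matrix.fromBlocks_diagonal]
        have e1 : (η ^ 2 • (1 : Matrix (Fin m) (Fin m) ℝ))
            = Matrix.diagonal (fun _ : Fin m => η ^ 2) := by
          ext i j
          by_cases h : i = j <;> simp [Matrix.one_apply, Matrix.diagonal_apply, h]
        have e2 : (0 : Matrix (Fin 1) (Fin 1) ℝ)
            = Matrix.diagonal (fun _ : Fin 1 => (0 : ℝ)) := by simp
        rw [e1, e2]
      rw [hd]
      refine Matrix.PosSemidef.diagonal fun i => ?_
      rcases i with i | i <;> simp <;> positivity
    have h3 := h1.add h2
    have h4 : Matrix.fromBlocks (Kmat k q m) (Bcol k q m)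
          (Matrix.of fun (_ : Fin 1) i => k (q m) (q i))
          (Matrix.of fun _ _ : Fin 1 => k (q m) (q m))
        + Matrix.fromBlocks (η ^ 2 • (1 : Matrix (Fin m) (Fin m) ℝ)) 0 0
          (0 : Matrix (Fin 1) (Fin 1) ℝ)
        = Matrix.fromBlocks (Amat k η q m) (Bcol k q m) (Bcol k q m)ᴴ
          (Matrix.of fun _ _ : Fin 1 => k (q m) (q m)) := by
      rw [Matrix.fromBlocks_add, hBH]
      congr 1 <;> simp [Amat, Kmat]
    rwa [h4] at h3
  have hschur := (Matrix.PosDef.fromBlocks₁₁ (Bcol k q m) _ hA).mp hP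
  have h00 := hschur.dotProduct_mulVec_nonneg (fun _ => 1)
  have hentry : (Matrix.of (fun _ _ : Fin 1 => k (q m) (q m))
      - (Bcol k q m)ᴴ * (Amat k η q m)⁻¹ * Bcol k q m) 0 0 = sig k η q m := by
    rw [Matrix.sub_apply, hBH]
    simp only [Matrix.of_apply, Bcol]
    rw [row_mul_col]
    have hw : (fun i : Fin m => k (q i) (q m)) = vvec k q m := funext fun i => hsymm _ _
    rw [hw]
    rfl
  rw [← hentry]
  simpa [dotProduct, Matrix.mulVec] using h00

lemma sig_le_one (hsymm : ∀ z w, k z w = k w z)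
    (hpsd : ∀ (m : ℕ) (z : Fin m → D), (Matrix.of fun i j => k (z i) (z j)).PosSemidef)
    (hbound : ∀ z, k z z ≤ 1) (hη : 0 < η) (m : ℕ) : sig k η q m ≤ 1 := by
  have hA := Amat_posDef k η q hpsd hη m
  have h := (hA.inv.posSemidef).dotProduct_mulVec_nonneg (vvec k q m)
  rw [star_trivial] at h
  have : sig k η q m ≤ k (q m) (q m) := by
    simp only [sig]
    linarith
  exact this.trans (hbound _)

end Main

end SumPostVarAux

open SumPostVarAux in
/-- explicit matrix form of Lemma B.2: For a symmetric PSD kernel `k`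
normalized so that `k(z,z) ≤ 1`, noise level `η > 0`, and queries `q₁, …, q_n`
(here `q 0, …, q (n-1)`), the sum of kernel ridge regression posterior variances at the
queried points is bounded by `(2 / log(1 + η⁻²))` times the information gain
`(1/2) log det(I_n + η⁻² K_n)`. -/
theorem sum_posterior_variances_le_information_gain
    {D : Type*} (k : D → D → ℝ) (hsymm : ∀ z w, k z w = k w z)
    (hpsd : ∀ (m : ℕ) (z : Fin m → D), (Matrix.of fun i j => k (z i) (z j)).PosSemidef)
    (hbound : ∀ z, k z z ≤ 1)
    (η : ℝ) (hη : 0 < η) (n : ℕ) (q : ℕ → D) :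
    ∑ t ∈ Finset.range n,
      (k (q t) (q t) -
        (fun i : Fin t => k (q t) (q i)) ⬝ᵥ
          (((Matrix.of fun i j : Fin t => k (q i) (q j))
              + η ^ 2 • (1 : Matrix (Fin t) (Fin t) ℝ))⁻¹
            *ᵥ fun i : Fin t => k (q t) (q i)))
      ≤ (2 / Real.log (1 + (η ^ 2)⁻¹)) *
        ((1 / 2) * Real.log
          ((1 + (η ^ 2)⁻¹ • Matrix.of fun i j : Fin n => k (q i) (q j)).det)) := by
  have hη2 : (0 : ℝ) < η ^ 2 := by positivity
  have hcpos : (0 : ℝ) < (η ^ 2)⁻¹ := by positivity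
  have hL : 0 < Real.log (1 + (η ^ 2)⁻¹) := Real.log_pos (by linarith)
  have hsig0 : ∀ t, 0 ≤ sig k η q t := sig_nonneg k η q hsymm hpsd hη
  have hsig1 : ∀ t, sig k η q t ≤ 1 := sig_le_one k η q hsymm hpsd hbound hη
  -- determinant identity
  have hdet : (1 + (η ^ 2)⁻¹ • Matrix.of fun i j : Fin n => k (q i) (q j)).det
      = ∏ t ∈ Finset.range n, (1 + (η ^ 2)⁻¹ * sig k η q t) := by
    have h1 : (1 : Matrix (Fin n) (Fin n) ℝ)
          + (η ^ 2)⁻¹ • Matrix.of (fun i j : Fin n => k (q i) (q j))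
        = (η ^ 2)⁻¹ • Amat k η q n := by
      rw [Amat, smul_add, smul_smul, inv_mul_cancel₀ hη2.ne', one_smul, add_comm]
    have hpc : ((η ^ 2)⁻¹) ^ n = ∏ _t ∈ Finset.range n, (η ^ 2)⁻¹ := by
      rw [Finset.prod_const, Finset.card_range]
    rw [h1, Matrix.det_smul, det_Amat k η q hsymm hpsd hη, Fintype.card_fin, hpc,
      ← Finset.prod_mul_distrib]
    refine Finset.prod_congr rfl fun t _ => ?_
    rw [mul_add, inv_mul_cancel₀ hη2.ne']
  have hfpos : ∀ t ∈ Finset.range n, (0 : ℝ) < 1 + (η ^ 2)⁻¹ * sig k η q t := by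
    intro t _
    have := mul_nonneg hcpos.le (hsig0 t)
    linarith
  have hlog : Real.log ((1 + (η ^ 2)⁻¹ • Matrix.of fun i j : Fin n => k (q i) (q j)).det)
      = ∑ t ∈ Finset.range n, Real.log (1 + (η ^ 2)⁻¹ * sig k η q t) := by
    rw [hdet, Real.log_prod fun t ht => (hfpos t ht).ne']
  -- per-term concavity bound
  have key : ∀ s : ℝ, 0 ≤ s → s ≤ 1 →
      s * Real.log (1 + (η ^ 2)⁻¹) ≤ Real.log (1 + (η ^ 2)⁻¹ * s) := by
    intro s hs0 hs1
    have h1m : (1 : ℝ) ∈ Set.Ioi (0 : ℝ) := by norm_num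
    have h2m : (1 + (η ^ 2)⁻¹) ∈ Set.Ioi (0 : ℝ) := by
      simp only [Set.mem_Ioi]; linarith
    have hcon := (strictConcaveOn_log_Ioi.concaveOn).2 h1m h2m
      (by linarith : (0 : ℝ) ≤ 1 - s) hs0 (by ring)
    simp only [smul_eq_mul, Real.log_one, mul_zero, mul_one] at hcon
    have harg : 1 - s + s * (1 + (η ^ 2)⁻¹) = 1 + (η ^ 2)⁻¹ * s := by ring
    rw [harg] at hcon
    linarith
  -- assemble
  have hsum : ∑ t ∈ Finset.range n,
      (k (q t) (q t) -
        (fun i : Fin t => k (q t) (q i)) ⬝ᵥ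
          (((Matrix.of fun i j : Fin t => k (q i) (q j))
              + η ^ 2 • (1 : Matrix (Fin t) (Fin t) ℝ))⁻¹
            *ᵥ fun i : Fin t => k (q t) (q i)))
      = ∑ t ∈ Finset.range n, sig k η q t :=
    Finset.sum_congr rfl fun t _ => rfl
  rw [hsum]
  calc ∑ t ∈ Finset.range n, sig k η q t
      ≤ ∑ t ∈ Finset.range n,
        (1 / Real.log (1 + (η ^ 2)⁻¹)) * Real.log (1 + (η ^ 2)⁻¹ * sig k η q t) := by
        refine Finset.sum_le_sum fun t _ => ?_
        have h2 := key (sig k η q t) (hsig0 t) (hsig1 t)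
        rw [one_div, inv_mul_eq_div, le_div_iff₀ hL]
        exact h2
    _ = (2 / Real.log (1 + (η ^ 2)⁻¹)) *
        ((1 / 2) * Real.log
          ((1 + (η ^ 2)⁻¹ • Matrix.of fun i j : Fin n => k (q i) (q j)).det)) := by
        rw [← Finset.mul_sum, hlog]
        ring
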